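/- For a nonzero x_s ∈ ℝⁿ, 1 < p < ∞, and any x_i ∈ ℝⁿ, the dual-valued p-norm computed element-wise agrees with the directional-derivative formula: (∑_k |x_s^k + x_i^k ε|^p)^{1/p} = ‖x_s‖_p + ⟨|x_s|^{p−2} ⊙ x_s, x_i⟩ / ‖x_s‖_p^{p−1} · ε, assuming x_s^k ≠ 0 for all k. -/

import Mathlib

/-- Absolute value of a dual number `(a, b)`: `|a| + sign(a) b ε` for `a ≠ 0`,
and `|b| ε` for `a = 0`. -/
noncomputable def dualAbs (c : ℝ × ℝ) : ℝ × ℝ :=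
  if c.1 = 0 then (0, |c.2|) else (|c.1|, Real.sign c.1 * c.2)

/-- Dual power with real exponent `q` (valid for positive standard part):
`(a + bε)^q = a^q + q a^{q−1} b ε`. -/
noncomputable def dualPow (q : ℝ) (c : ℝ × ℝ) : ℝ × ℝ :=
  (c.1 ^ q, q * c.1 ^ (q - 1) * c.2)

lemma real_sign_mul_abs (x : ℝ) : Real.sign x * |x| = x := by
  rcases lt_trichotomy x 0 with h | h | h
  · rw [Real.sign_of_neg h, abs_of_neg h]; ring
  · simp [h]
  · rw [Real.sign_of_pos h, abs_of_pos h]; ring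

/-- For a nonzero `x_s ∈ ℝⁿ` with all entries nonzero, `1 < p < ∞`, and any
`x_i`, the dual-valued `p`-norm computed element-wise on the dual vector
`x_s + x_i ε` agrees with the directional-derivative formula:
`(∑_k |x_s^k + x_i^k ε|^p)^{1/p} = ‖x_s‖_p + ⟨|x_s|^{p−2} ⊙ x_s, x_i⟩ / ‖x_s‖_p^{p−1} ε`. -/
theorem dual_pnorm_elementwise {n : ℕ} (p : ℝ) (hp : 1 < p) (xs xi : Fin n → ℝ)
    (hxs : ∀ k, xs k ≠ 0) :
    dualPow (1 / p) (∑ k, dualPow p (dualAbs (xs k, xi k)))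
      = ((∑ k, |xs k| ^ p) ^ (1 / p),
          (∑ k, |xs k| ^ (p - 2) * xs k * xi k)
            / ((∑ k, |xs k| ^ p) ^ (1 / p)) ^ (p - 1)) := by
  have hp0 : p ≠ 0 := by positivity
  -- per-element simplification
  have hterm : ∀ k, dualPow p (dualAbs (xs k, xi k))
      = (|xs k| ^ p, p * (|xs k| ^ (p - 2) * xs k * xi k)) := by
    intro k
    have hne : |xs k| ≠ 0 := abs_ne_zero.mpr (hxs k)
    have key : |xs k| ^ (p - 1) * (Real.sign (xs k) * xi k)
        = |xs k| ^ (p - 2) * xs k * xi k := by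
      have h1 : |xs k| ^ (p - 1) = |xs k| ^ (p - 2) * |xs k| := by
        rw [← Real.rpow_add_one hne (p - 2)]; ring_nf
      calc |xs k| ^ (p - 1) * (Real.sign (xs k) * xi k)
          = (|xs k| ^ (p - 2) * (Real.sign (xs k) * |xs k|)) * xi k := by
            rw [h1]; ring
        _ = |xs k| ^ (p - 2) * xs k * xi k := by rw [real_sign_mul_abs]
    simp only [dualPow, dualAbs, if_neg (hxs k)]
    rw [mul_assoc, key]
  have hfst : (∑ k, dualPow p (dualAbs (xs k, xi k))).1 = ∑ k, |xs k| ^ p := by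
    show (AddMonoidHom.fst ℝ ℝ) (∑ k, dualPow p (dualAbs (xs k, xi k))) = _
    rw [map_sum]
    simp only [hterm]
    rfl
  have hsnd : (∑ k, dualPow p (dualAbs (xs k, xi k))).2
      = ∑ k, p * (|xs k| ^ (p - 2) * xs k * xi k) := by
    show (AddMonoidHom.snd ℝ ℝ) (∑ k, dualPow p (dualAbs (xs k, xi k))) = _
    rw [map_sum]
    simp only [hterm]
    rfl
  set X := ∑ k, dualPow p (dualAbs (xs k, xi k)) with hX
  -- now compute the outer dualPow
  set S : ℝ := ∑ k, |xs k| ^ p with hS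
  set T : ℝ := ∑ k, |xs k| ^ (p - 2) * xs k * xi k with hT
  have hsum2 : (∑ k, (p * (|xs k| ^ (p - 2) * xs k * xi k))) = p * T := by
    rw [hT, Finset.mul_sum]
  rcases Nat.eq_zero_or_pos n with hn | hn
  · subst hn
    have hS0 : S = 0 := by simp [hS]
    have hT0 : T = 0 := by simp [hT]
    simp [dualPow, Prod.mk.injEq, hfst, hsnd, ← hS, ← hT, hS0, hT0,
      Real.zero_rpow (by positivity : 1 / p ≠ 0)]
  · haveI : Nonempty (Fin n) := Fin.pos_iff_nonempty.mp hn
    have hSpos : 0 < S := by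
      apply Finset.sum_pos
      · intro k _
        exact Real.rpow_pos_of_pos (abs_pos.mpr (hxs k)) p
      · exact Finset.univ_nonempty
    have hc : (S ^ (1 / p)) ^ (p - 1) = S ^ ((1 / p) * (p - 1)) := by
      rw [← Real.rpow_mul hSpos.le]
    have hexp : 1 / p - 1 = -((1 / p) * (p - 1)) := by
      field_simp
      ring
    simp only [dualPow, Prod.mk.injEq]
    rw [hfst, hsnd, hsum2]
    refine ⟨rfl, ?_⟩
    rw [hc, hexp, Real.rpow_neg hSpos.le]
    field_simp
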